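/- Let (a_k) be a nonnegative real sequence, τ ≥ 1 a real number, and B ≥ 0. Suppose for all k ≥ 0 that a_{k+1} ≤ (1 - 2/(k+τ+1)) · a_k + B/(4(k+1)^2). Then for all k ≥ 0, a_{k+1} ≤ τ^2 · a_0 / (k+τ+1)^2 + B·τ^2 / (k+τ+1). -/

import Mathlib

theorem stmt_0 (a : ℕ → ℝ) (τ B : ℝ)
    (ha : ∀ k, 0 ≤ a k) (hτ : 1 ≤ τ) (hB : 0 ≤ B)
    (hrec : ∀ k : ℕ, a (k + 1) ≤ (1 - 2 / ((k : ℝ) + τ + 1)) * a k + B / (4 * ((k : ℝ) + 1) ^ 2)) :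
    ∀ k : ℕ, a (k + 1) ≤ τ ^ 2 * a 0 / ((k : ℝ) + τ + 1) ^ 2 + B * τ ^ 2 / ((k : ℝ) + τ + 1) := by
  have hτ0 : (0:ℝ) < τ := lt_of_lt_of_le one_pos hτ
  have key : ∀ k : ℕ, a k ≤ τ ^ 2 * a 0 / ((k : ℝ) + τ) ^ 2 + B * τ ^ 2 / ((k : ℝ) + τ) := by
    intro k
    induction k with
    | zero =>
      simp only [Nat.cast_zero, zero_add]
      have h1 : τ ^ 2 * a 0 / τ ^ 2 = a 0 := by field_simp
      have h2 : B * τ ^ 2 / τ = B * τ := by field_simp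
      rw [h1, h2]
      nlinarith [ha 0, mul_nonneg hB hτ0.le]
    | succ k ih =>
      set t : ℝ := (k : ℝ) + τ with ht
      have htpos : (0:ℝ) < t := by positivity
      have ht1 : (1:ℝ) ≤ t := by
        have : (0:ℝ) ≤ (k:ℝ) := Nat.cast_nonneg k
        linarith
      have hu : (0:ℝ) < (k:ℝ) + 1 := by positivity
      have htu : t ≤ ((k:ℝ) + 1) * τ := by
        have : (0:ℝ) ≤ (k:ℝ) := Nat.cast_nonneg k
        nlinarith
      have hcast : ((k + 1 : ℕ) : ℝ) + τ = t + 1 := by push_cast; ring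
      rw [hcast]
      have hcoef : 1 - 2 / ((k:ℝ) + τ + 1) = (t - 1) / (t + 1) := by
        rw [ht]; field_simp; ring
      have hc0 : 0 ≤ (t - 1) / (t + 1) := by
        apply div_nonneg <;> linarith
      have hA : 0 ≤ τ ^ 2 * a 0 := mul_nonneg (by positivity) (ha 0)
      have step1 : a (k + 1) ≤ (t - 1) / (t + 1) * (τ ^ 2 * a 0 / t ^ 2 + B * τ ^ 2 / t)
          + B / (4 * ((k:ℝ) + 1) ^ 2) := by
        have := hrec k
        rw [hcoef] at this
        exact this.trans (by gcongr)
      have ineq1 : (t - 1) / (t + 1) * (τ ^ 2 * a 0 / t ^ 2) ≤ τ ^ 2 * a 0 / (t + 1) ^ 2 := by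
        rw [div_mul_div_comm, div_le_div_iff₀ (by positivity) (by positivity)]
        nlinarith [mul_nonneg hA (le_of_lt (by positivity : (0:ℝ) < t + 1))]
      have ineq2 : (t - 1) / (t + 1) * (B * τ ^ 2 / t) + B / (4 * ((k:ℝ) + 1) ^ 2)
          ≤ B * τ ^ 2 / (t + 1) := by
        have h1 : (t - 1) / (t + 1) * (B * τ ^ 2 / t) + B * τ ^ 2 / (t * (t + 1))
            = B * τ ^ 2 / (t + 1) := by
          field_simp
          ring
        have h2 : B / (4 * ((k:ℝ) + 1) ^ 2) ≤ B * τ ^ 2 / (t * (t + 1)) := by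
          rw [div_le_div_iff₀ (by positivity) (by positivity)]
          have h3 : t + 1 ≤ 2 * (((k:ℝ) + 1) * τ) := by nlinarith
          nlinarith [mul_nonneg hB (mul_nonneg htpos.le (by linarith : (0:ℝ) ≤ t + 1)),
            mul_le_mul htu h3 (by linarith) (by positivity),
            mul_nonneg hB (sq_nonneg (((k:ℝ)+1)*τ))]
        linarith [h1 ▸ add_le_add_right h2 ((t - 1) / (t + 1) * (B * τ ^ 2 / t))]
      calc a (k + 1) ≤ _ := step1
        _ = (t - 1) / (t + 1) * (τ ^ 2 * a 0 / t ^ 2) + ((t - 1) / (t + 1) * (B * τ ^ 2 / t)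
            + B / (4 * ((k:ℝ) + 1) ^ 2)) := by ring
        _ ≤ τ ^ 2 * a 0 / (t + 1) ^ 2 + B * τ ^ 2 / (t + 1) := add_le_add ineq1 ineq2
  intro k
  have := key (k + 1)
  have hc : ((k + 1 : ℕ) : ℝ) + τ = (k : ℝ) + τ + 1 := by push_cast; ring
  rwa [hc] at this
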